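/- Let P be a symmetric positive definite matrix partitioned into K×K blocks (K ≥ 1), and let P̃ be the block-diagonal matrix containing the diagonal blocks of P. Then the minimum eigenvalue of P P̃^{-1} is at most 1. -/

import Mathlib

open Matrix

/-- The block-diagonal part of a matrix indexed by a sigma type `(k : Fin K) × Fin (m k)`:
entries are kept iff the row and column indices lie in the same block. -/
noncomputable def blockDiagPart {K : ℕ} {m : Fin K → ℕ}
    (P : Matrix ((k : Fin K) × Fin (m k)) ((k : Fin K) × Fin (m k)) ℝ) :
    Matrix ((k : Fin K) × Fin (m k)) ((k : Fin K) × Fin (m k)) ℝ :=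
  Matrix.of fun i j => if i.1 = j.1 then P i j else 0

/-- A Hermitian real matrix minus `c • 1` is positive semidefinite whenever `c` is at most
every eigenvalue. -/
lemma sub_smul_one_posSemidef {n : Type*} [Fintype n] [DecidableEq n]
    {A : Matrix n n ℝ} (hA : A.IsHermitian) {c : ℝ}
    (hc : ∀ i, c ≤ hA.eigenvalues i) : (A - c • 1).PosSemidef := by
  have hU : (hA.eigenvectorUnitary : Matrix n n ℝ) * star (hA.eigenvectorUnitary : Matrix n n ℝ)
      = 1 := Matrix.mem_unitaryGroup_iff.mp hA.eigenvectorUnitary.2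
  have hD : Matrix.diagonal (RCLike.ofReal ∘ hA.eigenvalues) - c • (1 : Matrix n n ℝ)
      = Matrix.diagonal (fun i => hA.eigenvalues i - c) := by
    rw [Matrix.smul_one_eq_diagonal, Matrix.diagonal_sub]
    congr 1
  have key : A - c • 1 = (hA.eigenvectorUnitary : Matrix n n ℝ) *
      Matrix.diagonal (fun i => hA.eigenvalues i - c) *
      star (hA.eigenvectorUnitary : Matrix n n ℝ) := by
    have h1 : (c • (1 : Matrix n n ℝ)) = (hA.eigenvectorUnitary : Matrix n n ℝ) *
        (c • (1 : Matrix n n ℝ)) * star (hA.eigenvectorUnitary : Matrix n n ℝ) := by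
      rw [Matrix.mul_smul, Matrix.mul_one, Matrix.smul_mul, hU]
    conv_lhs => rw [hA.spectral_theorem, h1]
    rw [Unitary.conjStarAlgAut_apply, ← Matrix.sub_mul, ← Matrix.mul_sub, hD]
  rw [key, Matrix.star_eq_conjTranspose]
  exact (Matrix.posSemidef_diagonal_iff.mpr fun i => by
    simp [sub_nonneg.mpr (hc i)]).mul_mul_conjTranspose_same _

/-- The block-diagonal part of a positive definite matrix is positive definite. -/
lemma blockDiagPart_posDef {K : ℕ} {m : Fin K → ℕ}
    {P : Matrix ((k : Fin K) × Fin (m k)) ((k : Fin K) × Fin (m k)) ℝ}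
    (hP : P.PosDef) : (blockDiagPart P).PosDef := by
  classical
  refine Matrix.posDef_iff_dotProduct_mulVec.mpr ⟨?_, ?_⟩
  · ext i j
    simp only [blockDiagPart, Matrix.conjTranspose_apply, Matrix.of_apply, star_trivial]
    rcases eq_or_ne i.1 j.1 with h | h
    · rw [if_pos h.symm, if_pos h]
      have := congrFun (congrFun hP.1 i) j
      simpa using this
    · rw [if_neg (Ne.symm h), if_neg h]
  · intro x hx
    set xk : Fin K → ((k : Fin K) × Fin (m k)) → ℝ :=
      fun k i => if i.1 = k then x i else 0 with hxk
    have key : star x ⬝ᵥ (blockDiagPart P) *ᵥ x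
        = ∑ k : Fin K, star (xk k) ⬝ᵥ P *ᵥ (xk k) := by
      simp only [star_trivial, dotProduct, Matrix.mulVec, blockDiagPart,
        Matrix.of_apply, hxk]
      conv_rhs => rw [Finset.sum_comm]
      refine Finset.sum_congr rfl fun i _ => ?_
      have hite : ∀ k : Fin K, (if i.1 = k then x i else 0) *
          (∑ j, P i j * (if j.1 = k then x j else 0)) =
          (if i.1 = k then x i * (∑ j, P i j * (if j.1 = k then x j else 0)) else 0) := by
        intro k
        split <;> simp
      rw [Finset.sum_congr rfl fun k _ => hite k, Finset.sum_ite_eq,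
        if_pos (Finset.mem_univ _)]
      congr 1
      refine Finset.sum_congr rfl fun j _ => ?_
      rcases eq_or_ne i.1 j.1 with h | h
      · rw [if_pos h, if_pos h.symm]
      · rw [if_neg h, if_neg (Ne.symm h), zero_mul, mul_zero]
    rw [key]
    obtain ⟨i₁, hi₁⟩ := Function.ne_iff.mp hx
    refine Finset.sum_pos' (fun k _ => hP.posSemidef.dotProduct_mulVec_nonneg (xk k)) ⟨i₁.1, Finset.mem_univ _, ?_⟩
    refine hP.dotProduct_mulVec_pos (x := xk i₁.1) ?_
    intro h0
    apply hi₁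
    have := congrFun h0 i₁
    simpa [hxk] using this

theorem stmt1 {K : ℕ} (hK : 1 ≤ K) {m : Fin K → ℕ}
    (P : Matrix ((k : Fin K) × Fin (m k)) ((k : Fin K) × Fin (m k)) ℝ)
    (hP : P.PosDef) :
    sInf (spectrum ℝ (P * (blockDiagPart P)⁻¹)) ≤ 1 := by
  classical
  by_cases hι : Nonempty ((k : Fin K) × Fin (m k))
  swap
  · -- empty index type: the matrix algebra is trivial, the spectrum is empty
    haveI : IsEmpty ((k : Fin K) × Fin (m k)) := not_nonempty_iff.mp hι
    haveI : Subsingleton (Matrix ((k : Fin K) × Fin (m k)) ((k : Fin K) × Fin (m k)) ℝ) :=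
      ⟨fun a b => by ext i j; exact (IsEmpty.false i).elim⟩
    have hemp : spectrum ℝ (P * (blockDiagPart P)⁻¹) = ∅ := by
      ext r
      simp only [Set.mem_empty_iff_false, iff_false]
      intro hr
      exact (spectrum.mem_iff.mp hr) (isUnit_of_subsingleton _)
    rw [hemp, Real.sInf_empty]
    norm_num
  · obtain ⟨i₀⟩ := hι
    set Q := blockDiagPart P with hQdef
    have hQ : Q.PosDef := blockDiagPart_posDef hP
    open scoped MatrixOrder in
    set S := CFC.sqrt Q with hSdef
    open scoped MatrixOrder in
    have hSS : S * S = Q := CFC.sqrt_mul_sqrt_self Q hQ.posSemidef.nonneg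
    open scoped MatrixOrder in
    have hSH : S.IsHermitian := (CFC.sqrt_nonneg Q).posSemidef.1
    have hSdet : IsUnit S.det := by
      rw [isUnit_iff_ne_zero]
      intro h
      have : Q.det = 0 := by rw [← hSS, Matrix.det_mul, h, mul_zero]
      exact (hQ.det_pos.ne') this
    have hSu : IsUnit S := (Matrix.isUnit_iff_isUnit_det S).mpr hSdet
    have hSinv : (S⁻¹)ᴴ = S⁻¹ := by rw [Matrix.conjTranspose_nonsing_inv, hSH.eq]
    set A := S⁻¹ * P * S⁻¹ with hAdef
    have hAH : A.IsHermitian := by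
      show Aᴴ = A
      rw [hAdef, Matrix.conjTranspose_mul, Matrix.conjTranspose_mul, hSinv, hP.1.eq, mul_assoc]
    -- spectrum equality via conjugation by S
    have h1 : S * A = P * S⁻¹ := by
      rw [hAdef, ← mul_assoc, ← mul_assoc, Matrix.mul_nonsing_inv _ hSdet, one_mul]
    have hQinv : Q⁻¹ = S⁻¹ * S⁻¹ := by rw [← hSS, Matrix.mul_inv_rev]
    have hconj : S * A * S⁻¹ = P * Q⁻¹ := by rw [h1, hQinv, mul_assoc]
    have hspec : spectrum ℝ (P * Q⁻¹) = spectrum ℝ A := by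
      rw [← hconj]
      obtain ⟨u, hu⟩ := hSu
      have hui : (↑u⁻¹ : Matrix ((k : Fin K) × Fin (m k)) ((k : Fin K) × Fin (m k)) ℝ) = S⁻¹ := by
        rw [Matrix.coe_units_inv, hu]
      rw [← hui, ← hu]
      exact spectrum.units_conjugate
    rw [hspec]
    -- minimum eigenvalue of A
    obtain ⟨imin, _, hmin⟩ :=
      Finset.exists_min_image Finset.univ hAH.eigenvalues ⟨i₀, Finset.mem_univ _⟩
    set μ := hAH.eigenvalues imin with hμdef
    have hμmem : μ ∈ spectrum ℝ A := hAH.eigenvalues_mem_spectrum_real imin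
    have hbdd : BddBelow (spectrum ℝ A) := (A.finite_spectrum).bddBelow
    refine le_trans (csInf_le hbdd hμmem) ?_
    -- show μ ≤ 1 by contradiction
    by_contra hμ
    push_neg at hμ
    have hpsd : (A - μ • 1).PosSemidef :=
      sub_smul_one_posSemidef hAH fun i => hmin i (Finset.mem_univ i)
    set y : ((k : Fin K) × Fin (m k)) → ℝ := Pi.single i₀ 1 with hydef
    set x : ((k : Fin K) × Fin (m k)) → ℝ := S *ᵥ y with hxdef
    have hST : Sᵀ = S := by
      ext i j
      have := congrFun (congrFun hSH.eq i) j
      simpa using this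
    have hxdot : ∀ w, x ⬝ᵥ w = y ⬝ᵥ (S *ᵥ w) := by
      intro w
      rw [hxdef]
      conv_lhs => rw [dotProduct_comm, Matrix.dotProduct_mulVec,
        dotProduct_comm, ← Matrix.mulVec_transpose, hST]
    have hyPy : y ⬝ᵥ P *ᵥ y = P i₀ i₀ := by
      simp [hydef, Matrix.mulVec_single, single_dotProduct]
    have hxAx : x ⬝ᵥ A *ᵥ x = P i₀ i₀ := by
      have hA1 : A *ᵥ x = (S⁻¹ * P) *ᵥ y := by
        rw [hxdef, hAdef, Matrix.mulVec_mulVec, mul_assoc, mul_assoc,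
          Matrix.nonsing_inv_mul _ hSdet, Matrix.mul_one]
      rw [hA1, hxdot, Matrix.mulVec_mulVec, ← mul_assoc,
        Matrix.mul_nonsing_inv _ hSdet, Matrix.one_mul, hyPy]
    have hxx : x ⬝ᵥ x = P i₀ i₀ := by
      rw [hxdot, hxdef, Matrix.mulVec_mulVec, hSS]
      simp [hydef, hQdef, blockDiagPart, Matrix.mulVec_single, single_dotProduct]
    have hy0 : y ≠ 0 := by
      intro h
      have := congrFun h i₀
      simp [hydef] at this
    have hPpos : 0 < P i₀ i₀ := by
      have := hP.dotProduct_mulVec_pos hy0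
      rwa [star_trivial, hyPy] at this
    have h0 := hpsd.dotProduct_mulVec_nonneg x
    rw [star_trivial, Matrix.sub_mulVec, dotProduct_sub, Matrix.smul_mulVec,
      Matrix.one_mulVec, dotProduct_smul, hxAx, hxx, smul_eq_mul] at h0
    nlinarith
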